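/- Let R be a principal ideal domain that is not a field and let M be a finitely generated R-module with invariant factor decomposition M ≅ R^n ⊕ R/⟨a₁⟩ ⊕ ⋯ ⊕ R/⟨a_m⟩, where the a_i are nonzero nonunits with a₁ ∣ a₂ ∣ ⋯ ∣ a_m. Then M has a proper essential submodule if and only if n ≥ 1 or some a_i is not square-free. -/

import Mathlib

/-- `E` is a proper essential submodule of `M`: a proper nontrivial submodule that
intersects every nonzero submodule nontrivially. -/
def IsProperEssential {R M : Type*} [Ring R] [AddCommGroup M] [Module R M]
    (E : Submodule R M) : Prop :=
  E ≠ ⊥ ∧ E ≠ ⊤ ∧ ∀ N : Submodule R M, N ≠ ⊥ → E ⊓ N ≠ ⊥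

section Aux

variable {R : Type*} [CommRing R] {M : Type*} [AddCommGroup M] [Module R M]
variable {M' : Type*} [AddCommGroup M'] [Module R M']

/-- Existence of proper essential submodules transports along linear equivalences. -/
lemma exists_isProperEssential_congr (f : M ≃ₗ[R] M')
    (h : ∃ E : Submodule R M, IsProperEssential E) :
    ∃ E' : Submodule R M', IsProperEssential E' := by
  obtain ⟨E, h1, h2, h3⟩ := h
  refine ⟨E.map (f : M →ₗ[R] M'), ?_, ?_, ?_⟩
  · rw [Submodule.ne_bot_iff] at h1 ⊢
    obtain ⟨x, hxE, hx⟩ := h1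
    exact ⟨f x, Submodule.mem_map_of_mem hxE,
      fun hc => hx (by simpa using f.map_eq_zero_iff.1 hc)⟩
  · intro hc
    apply h2
    rw [Submodule.eq_top_iff']
    intro x
    have hx : f x ∈ E.map (f : M →ₗ[R] M') := by rw [hc]; trivial
    obtain ⟨y, hy, hyx⟩ := hx
    exact f.injective hyx ▸ hy
  · intro N' hN'
    rw [Submodule.ne_bot_iff] at hN' ⊢
    obtain ⟨x', hx'N, hx'0⟩ := hN'
    have hN : (N'.map (f.symm : M' →ₗ[R] M)) ≠ ⊥ := by
      rw [Submodule.ne_bot_iff]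
      exact ⟨f.symm x', Submodule.mem_map_of_mem hx'N,
        fun hc => hx'0 (f.symm.map_eq_zero_iff.1 hc)⟩
    have hin := h3 _ hN
    rw [Submodule.ne_bot_iff] at hin
    obtain ⟨w, hw, hw0⟩ := hin
    rw [Submodule.mem_inf] at hw
    obtain ⟨hwE, hwN⟩ := hw
    refine ⟨f w, Submodule.mem_inf.2 ⟨Submodule.mem_map_of_mem hwE, ?_⟩,
      fun hc => hw0 (f.map_eq_zero_iff.1 hc)⟩
    obtain ⟨u, huN, hu⟩ := hwN
    rw [← hu]
    show f (f.symm u) ∈ N'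
    rw [f.apply_symm_apply]
    exact huN

/-- A module annihilated by a squarefree element of a PID has no proper essential submodule. -/
lemma not_isProperEssential_of_squarefree_smul [IsDomain R] [IsPrincipalIdealRing R]
    (A : R) (hsq : Squarefree A) (hann : ∀ z : M, A • z = 0)
    (E : Submodule R M) : ¬ IsProperEssential E := by
  rintro ⟨hEbot, hEtop, hEess⟩
  obtain ⟨z, hz⟩ : ∃ z, z ∉ E := by
    by_contra h
    push_neg at h
    exact hEtop (Submodule.eq_top_iff'.2 h)
  obtain ⟨d, hdI⟩ :=
    (IsPrincipalIdealRing.principal (E.comap (LinearMap.toSpanSingleton R M z))).principal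
  have hmem : ∀ c : R, c • z ∈ E ↔ d ∣ c := by
    intro c
    have h0 : c • z ∈ E ↔ c ∈ E.comap (LinearMap.toSpanSingleton R M z) := by
      rw [Submodule.mem_comap, LinearMap.toSpanSingleton_apply]
    rw [h0, hdI, Ideal.submodule_span_eq, Ideal.mem_span_singleton]
  have hdu : ¬ IsUnit d := by
    intro h
    exact hz (by simpa using (hmem 1).2 h.dvd)
  have hdA : d ∣ A := (hmem A).1 (by rw [hann z]; exact E.zero_mem)
  obtain ⟨b, hab⟩ := hdA
  have hsq' : Squarefree (d * b) := hab ▸ hsq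
  have hcop : IsCoprime d b := by
    refine IsRelPrime.isCoprime ?_
    intro c hcd hcb
    exact hsq' c (mul_dvd_mul hcd hcb)
  have hbz : b • z ≠ 0 := by
    intro h0
    have hdb : d ∣ b := (hmem b).1 (by rw [h0]; exact E.zero_mem)
    obtain ⟨t, rfl⟩ := hdb
    exact hdu (hsq' d ⟨t, by ring⟩)
  have hN : Submodule.span R {b • z} ≠ ⊥ :=
    fun h => hbz (Submodule.span_singleton_eq_bot.1 h)
  have hin := hEess _ hN
  rw [Submodule.ne_bot_iff] at hin
  obtain ⟨w, hw, hw0⟩ := hin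
  rw [Submodule.mem_inf] at hw
  obtain ⟨hwE, hwN⟩ := hw
  obtain ⟨c, rfl⟩ := Submodule.mem_span_singleton.1 hwN
  have hcE : (c * b) • z ∈ E := by rwa [mul_smul]
  obtain ⟨s, rfl⟩ := hcop.dvd_of_dvd_mul_right ((hmem _).1 hcE)
  apply hw0
  rw [smul_smul]
  have h2 : d * s * b = s * A := by rw [hab]; ring
  rw [h2, mul_smul, hann z, smul_zero]

/-- Sufficient conditions for `comap φ S` being a proper essential submodule. -/
lemma isProperEssential_comap {W : Type*} [AddCommGroup W] [Module R W]
    (φ : M →ₗ[R] W) (S : Submodule R W)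
    (hproper : ∃ z : M, φ z ∉ S)
    (hnebot : ∃ z : M, z ≠ 0 ∧ φ z ∈ S)
    (hess : ∀ z : M, z ≠ 0 → ∃ c : R, c • z ≠ 0 ∧ φ (c • z) ∈ S) :
    IsProperEssential (S.comap φ) := by
  refine ⟨?_, ?_, ?_⟩
  · obtain ⟨z, hz0, hzS⟩ := hnebot
    exact (Submodule.ne_bot_iff _).2 ⟨z, Submodule.mem_comap.2 hzS, hz0⟩
  · obtain ⟨z, hz⟩ := hproper
    intro hc
    apply hz
    have : z ∈ S.comap φ := by rw [hc]; trivial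
    exact Submodule.mem_comap.1 this
  · intro N hN
    rw [Submodule.ne_bot_iff] at hN ⊢
    obtain ⟨z, hzN, hz0⟩ := hN
    obtain ⟨c, hc0, hcS⟩ := hess z hz0
    exact ⟨c • z, Submodule.mem_inf.2 ⟨Submodule.mem_comap.2 hcS, N.smul_mem c hzN⟩, hc0⟩

end Aux

/-- A finitely generated module over a PID (not a field) with invariant factor decomposition
`M ≅ Rⁿ ⊕ R/⟨a₁⟩ ⊕ ⋯ ⊕ R/⟨a_m⟩` has a proper essential submodule iff `n ≥ 1` or some
invariant factor is not square-free. -/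
theorem fg_pid_properEssential_iff {R : Type*} [CommRing R] [IsDomain R]
    [IsPrincipalIdealRing R] (hR : ¬ IsField R) {M : Type*} [AddCommGroup M] [Module R M]
    [Module.Finite R M] (n m : ℕ) (a : Fin m → R)
    (ha0 : ∀ i, a i ≠ 0) (hau : ∀ i, ¬ IsUnit (a i))
    (hchain : ∀ i j : Fin m, i ≤ j → a i ∣ a j)
    (e : M ≃ₗ[R] (Fin n → R) × ((i : Fin m) → R ⧸ Ideal.span {a i})) :
    (∃ E : Submodule R M, IsProperEssential E) ↔
      1 ≤ n ∨ ∃ i, ¬ Squarefree (a i) := by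
  constructor
  · rintro ⟨E, hE⟩
    by_contra hcon
    push_neg at hcon
    obtain ⟨hn, hsq⟩ := hcon
    have hn0 : n = 0 := by omega
    subst hn0
    rcases Nat.eq_zero_or_pos m with hm | hm
    · subst hm
      have hz : ∀ z : M, z = 0 := by
        intro z
        have h1 : e z = 0 := by
          refine Prod.ext ?_ ?_
          · funext i; exact i.elim0
          · funext i; exact i.elim0
        calc z = e.symm (e z) := (e.symm_apply_apply z).symm
        _ = e.symm 0 := by rw [h1]
        _ = 0 := map_zero _
      exact not_isProperEssential_of_squarefree_smul (1 : R) squarefree_one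
        (fun z => by rw [hz z, smul_zero]) E hE
    · set L : Fin m := ⟨m - 1, by omega⟩ with hL
      have hA : ∀ i, a i ∣ a L := by
        intro i
        refine hchain i L ?_
        have := i.isLt
        rw [Fin.le_def, hL]
        simp only []
        omega
      refine not_isProperEssential_of_squarefree_smul (a L) (hsq L) ?_ E hE
      intro z
      have h1 : e (a L • z) = 0 := by
        rw [map_smul]
        refine Prod.ext ?_ ?_
        · funext i; exact i.elim0
        · funext i
          show a L • ((e z).2 i) = 0
          obtain ⟨u, hu⟩ := Submodule.Quotient.mk_surjective _ ((e z).2 i)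
          rw [← hu, ← Submodule.Quotient.mk_smul, Submodule.Quotient.mk_eq_zero,
            smul_eq_mul, Ideal.mem_span_singleton]
          exact (hA i).mul_right u
      have h2 := congrArg e.symm h1
      rwa [e.symm_apply_apply, map_zero] at h2
  · intro h
    refine exists_isProperEssential_congr e.symm ?_
    rcases h with hn | ⟨i, hsq⟩
    · obtain ⟨r, hr0, hru⟩ : ∃ r : R, r ≠ 0 ∧ ¬ IsUnit r := by
        by_contra h
        push_neg at h
        exact hR ⟨exists_pair_ne R, mul_comm, fun {a} ha => (h a ha).exists_right_inv⟩
      set i0 : Fin n := ⟨0, hn⟩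
      set φ : ((Fin n → R) × ((i : Fin m) → R ⧸ Ideal.span {a i})) →ₗ[R] R :=
        (LinearMap.proj i0).comp (LinearMap.fst R _ _) with hφ
      refine ⟨_, isProperEssential_comap φ (Ideal.span {r}) ?_ ?_ ?_⟩
      · refine ⟨((fun _ => 1), 0), ?_⟩
        show (1 : R) ∉ Ideal.span {r}
        rw [Ideal.mem_span_singleton]
        exact fun h => hru (isUnit_of_dvd_one h)
      · refine ⟨((fun _ => r), 0), ?_, ?_⟩
        · intro hc
          exact hr0 (congrArg (fun p => p.1 i0) hc)
        · show r ∈ Ideal.span {r}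
          exact Ideal.mem_span_singleton_self r
      · intro z hz0
        by_cases hzS : φ z ∈ Ideal.span {r}
        · exact ⟨1, by simpa using hz0, by simpa using hzS⟩
        · have hz1 : φ z ≠ 0 := fun h => hzS (by rw [h]; exact zero_mem _)
          refine ⟨r, ?_, ?_⟩
          · intro hc
            have h3 := congrArg φ hc
            rw [map_smul, map_zero, smul_eq_mul] at h3
            rcases mul_eq_zero.1 h3 with h | h
            · exact hr0 h
            · exact hz1 h
          · rw [map_smul, smul_eq_mul]
            exact Ideal.mem_span_singleton.2 (dvd_mul_right r (φ z))
    · unfold Squarefree at hsq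
      push_neg at hsq
      obtain ⟨p, hpp, hpu⟩ := hsq
      have hp0 : p ≠ 0 := by
        intro h
        apply ha0 i
        rw [h] at hpp
        simpa using hpp
      have hpa : p ∣ a i := dvd_trans (dvd_mul_right p p) hpp
      set φ : ((Fin n → R) × ((j : Fin m) → R ⧸ Ideal.span {a j})) →ₗ[R] (R ⧸ Ideal.span {a i}) :=
        (LinearMap.proj i).comp (LinearMap.snd R _ _) with hφ
      set S : Submodule R (R ⧸ Ideal.span {a i}) :=
        Submodule.span R {(Submodule.Quotient.mk p : R ⧸ Ideal.span {a i})} with hS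
      have hmk : ∀ u : R, ((Submodule.Quotient.mk u : R ⧸ Ideal.span {a i}) ∈ S ↔ p ∣ u) := by
        intro u
        constructor
        · intro hu
          obtain ⟨c, hc⟩ := Submodule.mem_span_singleton.1 hu
          rw [← Submodule.Quotient.mk_smul] at hc
          have hsub : c • p - u ∈ Ideal.span {a i} := (Submodule.Quotient.eq _).1 hc
          rw [Ideal.mem_span_singleton] at hsub
          have h1 : p ∣ c • p - u := dvd_trans hpa hsub
          have h2 : p ∣ c • p := by rw [smul_eq_mul]; exact dvd_mul_left p c
          have := dvd_sub h2 h1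
          rwa [sub_sub_cancel] at this
        · rintro ⟨t, rfl⟩
          refine Submodule.mem_span_singleton.2 ⟨t, ?_⟩
          rw [← Submodule.Quotient.mk_smul, smul_eq_mul, mul_comm]
      have hmknz : ∀ u : R, ¬ (a i ∣ u) → (Submodule.Quotient.mk u : R ⧸ Ideal.span {a i}) ≠ 0 := by
        intro u hnd hc
        rw [Submodule.Quotient.mk_eq_zero, Ideal.mem_span_singleton] at hc
        exact hnd hc
      have hφa : ∀ w : (Fin n → R) × ((j : Fin m) → R ⧸ Ideal.span {a j}),
          φ w = w.2 i := fun w => rfl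
      refine ⟨_, isProperEssential_comap φ S ?_ ?_ ?_⟩
      · refine ⟨(0, Pi.single i (Submodule.Quotient.mk 1 : R ⧸ Ideal.span {a i})), ?_⟩
        rw [hφa]
        simp only [Pi.single_eq_same]
        rw [hmk]
        exact fun h => hpu (isUnit_of_dvd_one h)
      · refine ⟨(0, Pi.single i (Submodule.Quotient.mk p : R ⧸ Ideal.span {a i})), ?_, ?_⟩
        · intro hc
          have h3 := congrArg (fun w => w.2 i) hc
          simp only [Pi.single_eq_same] at h3
          refine hmknz p ?_ h3
          intro hap
          obtain ⟨t, ht⟩ := dvd_trans hpp hap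
          apply hpu
          have h4 : (1 : R) = p * t := by
            apply mul_left_cancel₀ hp0
            rw [mul_one, ← mul_assoc, ← ht]
          exact IsUnit.of_mul_eq_one t h4.symm
        · rw [hφa]
          simp only [Pi.single_eq_same]
          exact Submodule.mem_span_singleton_self _
      · intro z hz0
        obtain ⟨u, hu⟩ := Submodule.Quotient.mk_surjective _ (φ z)
        by_cases hpu' : p ∣ u
        · exact ⟨1, by simpa using hz0, by rw [one_smul, ← hu]; exact (hmk u).2 hpu'⟩
        · refine ⟨p, ?_, ?_⟩
          · intro hc
            have h3 := congrArg φ hc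
            rw [map_smul, map_zero, ← hu, ← Submodule.Quotient.mk_smul, smul_eq_mul] at h3
            rw [Submodule.Quotient.mk_eq_zero, Ideal.mem_span_singleton] at h3
            obtain ⟨t, ht⟩ := dvd_trans hpp h3
            exact hpu' ⟨t, mul_left_cancel₀ hp0 (by rw [ht]; ring)⟩
          · rw [map_smul, ← hu, ← Submodule.Quotient.mk_smul, smul_eq_mul]
            exact (hmk _).2 (dvd_mul_right p u)
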